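/- arXiv:2412.04389 — 4 statements merged into one kernel-verified Lean document; each statement's English description precedes it below -/
import Mathlib

section
/- For any hypergraph H, m(H) = m(H^*), where m denotes the maximum cardinality of a C-matching in the incidence graph. -/
open scoped Classical

section Defs

variable {V E : Type*}

/-- The set of vertices eventually burned when `B` is initially burned:
a vertex burns if it is initially burned, or if some hyperedge contains it and
all other vertices of that hyperedge are burned. -/
inductive Burns (edges : E → Finset V) (B : Set V) : V → Prop
  | init (v : V) : v ∈ B → Burns edges B v
  | spread (h : E) (v : V) : v ∈ edges h →
      (∀ u, u ∈ edges h → u ≠ v → Burns edges B u) → Burns edges B v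

/-- `B` is a lazy burning set if every vertex eventually burns. -/
def IsLazyBurningSet (edges : E → Finset V) (B : Set V) : Prop :=
  ∀ v, Burns edges B v

/-- The lazy burning number: minimum size of a lazy burning set. -/
noncomputable def lazyBurningNumber [Fintype V] (edges : E → Finset V) : ℕ :=
  sInf {n | ∃ B : Finset V, B.card = n ∧ IsLazyBurningSet edges ↑B}

/-- A `C`-matching in the incidence graph: a list of incidence pairs `(vᵢ, hᵢ)`
with the `vᵢ` distinct, such that `hᵢ` contains none of the later vertices. -/
def IsCMatching (edges : E → Finset V) (L : List (V × E)) : Prop :=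
  (∀ p ∈ L, p.1 ∈ edges p.2) ∧ (L.map Prod.fst).Nodup ∧
  ∀ i j (hi : i < L.length) (hj : j < L.length), i < j →
    (L.get ⟨j, hj⟩).1 ∉ edges (L.get ⟨i, hi⟩).2

/-- `m(H)`: maximum cardinality (length) of a `C`-matching. -/
noncomputable def maxCMatching (edges : E → Finset V) : ℕ :=
  sSup {k | ∃ L : List (V × E), IsCMatching edges L ∧ L.length = k}

/-- A chronological list of lazy burnings starting from `B0`: a list of pairs
`(hᵢ, vᵢ)` with `vᵢ ∈ hᵢ` and `hᵢ \ {vᵢ} ⊆ B_{i-1} = B0 ∪ {v₁, …, v_{i-1}}`. -/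
def IsChronList (edges : E → Finset V) (B0 : Set V) (L : List (E × V)) : Prop :=
  ∀ i (hi : i < L.length),
    (L.get ⟨i, hi⟩).2 ∈ edges (L.get ⟨i, hi⟩).1 ∧
    ∀ u, u ∈ edges (L.get ⟨i, hi⟩).1 → u ≠ (L.get ⟨i, hi⟩).2 →
      u ∈ B0 ∨ ∃ j, ∃ hj : j < L.length, j < i ∧ u = (L.get ⟨j, hj⟩).2

/-- The dual hypergraph: vertices are the hyperedges of `H`, and for each vertex
`v` of `H` there is a hyperedge `N(v) = {h : v ∈ h}`. -/
noncomputable def dualEdges [Fintype E] (edges : E → Finset V) (v : V) : Finset E :=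
  Finset.univ.filter (fun h => v ∈ edges h)

/-- `U` induces a subhypergraph all of whose hyperedges have cardinality `> 1`. -/
def GoodSet (edges : E → Finset V) (U : Finset V) : Prop :=
  ∀ h : E, ((edges h) ∩ U).Nonempty → 1 < ((edges h) ∩ U).card

/-- The vertex set of the core of `H`: the maximum induced subhypergraph all of
whose hyperedges have cardinality `> 1`. -/
noncomputable def coreSet [Fintype V] (edges : E → Finset V) : Finset V :=
  (Finset.univ : Finset V).powerset.sup (fun U => if GoodSet edges U then U else ∅)

/-- The zero forcing closure: a black vertex `u` with unique white neighbor `v`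
forces `v`. -/
inductive ZFClosure {α : Type*} (G : SimpleGraph α) (B : Set α) : α → Prop
  | init (v : α) : v ∈ B → ZFClosure G B v
  | force (u v : α) : ZFClosure G B u → G.Adj u v →
      (∀ w, G.Adj u w → w ≠ v → ZFClosure G B w) → ZFClosure G B v

def IsZeroForcingSet {α : Type*} (G : SimpleGraph α) (B : Set α) : Prop :=
  ∀ v, ZFClosure G B v

noncomputable def zeroForcingNumber {α : Type*} [Fintype α] (G : SimpleGraph α) : ℕ :=
  sInf {n | ∃ B : Finset α, B.card = n ∧ IsZeroForcingSet G ↑B}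

/-- The skew zero forcing closure: any vertex `u` (black or white) with a unique
white neighbor `v` forces `v`. -/
inductive SkewZFClosure {α : Type*} (G : SimpleGraph α) (B : Set α) : α → Prop
  | init (v : α) : v ∈ B → SkewZFClosure G B v
  | force (u v : α) : G.Adj u v →
      (∀ w, G.Adj u w → w ≠ v → SkewZFClosure G B w) → SkewZFClosure G B v

def IsSkewZeroForcingSet {α : Type*} (G : SimpleGraph α) (B : Set α) : Prop :=
  ∀ v, SkewZFClosure G B v

noncomputable def skewZeroForcingNumber {α : Type*} [Fintype α] (G : SimpleGraph α) : ℕ :=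
  sInf {n | ∃ B : Finset α, B.card = n ∧ IsSkewZeroForcingSet G ↑B}

/-- The incidence (Levi) graph of a hypergraph. -/
def incidenceGraph (edges : E → Finset V) : SimpleGraph (V ⊕ E) where
  Adj x y := (∃ v h, x = Sum.inl v ∧ y = Sum.inr h ∧ v ∈ edges h) ∨
             (∃ v h, x = Sum.inr h ∧ y = Sum.inl v ∧ v ∈ edges h)
  symm := ⟨by
    rintro x y (⟨v, h, rfl, rfl, hm⟩ | ⟨v, h, rfl, rfl, hm⟩)
    · exact Or.inr ⟨v, h, rfl, rfl, hm⟩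
    · exact Or.inl ⟨v, h, rfl, rfl, hm⟩⟩
  loopless := ⟨by
    rintro x (⟨v, h, h1, h2, _⟩ | ⟨v, h, h1, h2, _⟩) <;> subst h1 <;> simp_all⟩

/-- The star `K_{1,j}` with center `0`. -/
def starGraph (j : ℕ) : SimpleGraph (Fin (j + 1)) where
  Adj a b := a ≠ b ∧ (a = 0 ∨ b = 0)
  symm := ⟨fun _ _ ⟨hne, hor⟩ => ⟨hne.symm, hor.symm⟩⟩
  loopless := ⟨fun _ ha => ha.1 rfl⟩

end Defs


lemma swap_rev {V E : Type*} (edges : E → Finset V) (edges' : V → Finset E)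
    (hrel : ∀ v h, v ∈ edges h ↔ h ∈ edges' v) (L : List (V × E))
    (hL : IsCMatching edges L) : IsCMatching edges' ((L.map Prod.swap).reverse) := by
  obtain ⟨h1, h2, h3⟩ := hL
  have hlen : ((L.map Prod.swap).reverse).length = L.length := by simp
  have hget : ∀ i (hi : i < ((L.map Prod.swap).reverse).length),
      ((L.map Prod.swap).reverse).get ⟨i, hi⟩ =
        Prod.swap (L.get ⟨L.length - 1 - i, by omega⟩) := by
    intro i hi
    simp only [List.get_eq_getElem, List.getElem_reverse, List.getElem_map, List.length_map]
  refine ⟨?_, ?_, ?_⟩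
  · intro p hp
    simp only [List.mem_reverse, List.mem_map] at hp
    obtain ⟨q, hq, rfl⟩ := hp
    exact (hrel _ _).mp (h1 q hq)
  · rw [List.map_reverse, List.map_map, List.nodup_reverse]
    have : (Prod.fst ∘ Prod.swap : V × E → E) = Prod.snd := rfl
    rw [this]
    rw [List.nodup_iff_injective_get]
    intro i j hij
    simp only [List.get_eq_getElem, List.getElem_map, List.length_map] at hij
    by_contra hne
    have hne' : (i : ℕ) ≠ j := fun h => hne (Fin.ext (by simpa using h))
    rcases lt_or_gt_of_ne hne' with h | h
    · have := h3 i j (by simpa using i.2) (by simpa using j.2) h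
      exact this (hij ▸ h1 _ (List.getElem_mem _))
    · have := h3 j i (by simpa using j.2) (by simpa using i.2) h
      exact this (hij ▸ h1 _ (List.getElem_mem _))
  · intro i j hi hj hij
    rw [hget i hi, hget j hj]
    simp only [Prod.fst_swap, Prod.snd_swap]
    rw [hlen] at hi hj
    intro hmem
    have := h3 (L.length - 1 - j) (L.length - 1 - i) (by omega) (by omega) (by omega)
    exact this ((hrel _ _).mpr hmem)

theorem stmt4 {V E : Type*} [Fintype E] (edges : E → Finset V) :
    maxCMatching edges = maxCMatching (dualEdges edges) := by
  have hrel : ∀ (v : V) (h : E), v ∈ edges h ↔ h ∈ dualEdges edges v := by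
    intro v h; simp [dualEdges]
  unfold maxCMatching
  congr 1
  ext k
  constructor
  · rintro ⟨L, hL, rfl⟩
    exact ⟨(L.map Prod.swap).reverse, swap_rev edges (dualEdges edges) hrel L hL, by simp⟩
  · rintro ⟨L, hL, rfl⟩
    exact ⟨(L.map Prod.swap).reverse,
      swap_rev (dualEdges edges) edges (fun h v => (hrel v h).symm) L hL, by simp⟩
end

section
/- Let H be a hypergraph, h \in E(H), B \subseteq V(H) with h \subseteq B, and u \in h. Then B is a lazy burning set for H if and only if B \setminus \{u\} is a lazy burning set for H. -/
open scoped Classical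

theorem stmt13 {V E : Type*} (edges : E → Finset V) (h : E) (B : Set V)
    (hB : ↑(edges h) ⊆ B) (u : V) (hu : u ∈ edges h) :
    IsLazyBurningSet edges B ↔ IsLazyBurningSet edges (B \ {u}) := by
  have mono : ∀ (B1 B2 : Set V), (∀ b ∈ B1, Burns edges B2 b) →
      ∀ v, Burns edges B1 v → Burns edges B2 v := by
    intro B1 B2 h12 v hv
    induction hv with
    | init v hv => exact h12 v hv
    | spread e v hve _ ih => exact Burns.spread e v hve ih
  constructor
  · intro hL v
    refine mono B (B \ {u}) ?_ v (hL v)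
    intro b hb
    by_cases hbu : b = u
    · subst hbu
      refine Burns.spread h b hu ?_
      intro w hw hwb
      exact Burns.init w ⟨hB hw, hwb⟩
    · exact Burns.init b ⟨hb, hbu⟩
  · intro hL v
    exact mono (B \ {u}) B (fun b hb => Burns.init b hb.1) v (hL v)
end

section
/- For any hypergraph H and B \subseteq V(core(H)), B is a lazy burning set for core(H) if and only if B is a lazy burning set for H. Consequently b_L(H) = b_L(core(H)). -/
open scoped Classical

section Aux

variable {V E : Type*} [Fintype V]

lemma good_subset_core (edges : E → Finset V) {U : Finset V} (hU : GoodSet edges U) :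
    U ⊆ coreSet edges := by
  intro v hv
  have h := Finset.le_sup (f := fun U => if GoodSet edges U then U else ∅)
    (Finset.mem_powerset.2 (Finset.subset_univ U))
  simp only [if_pos hU] at h
  exact h hv

lemma core_good (edges : E → Finset V) : GoodSet edges (coreSet edges) := by
  intro h hne
  obtain ⟨v, hv⟩ := hne
  rw [Finset.mem_inter] at hv
  obtain ⟨U, _, hvU⟩ := Finset.mem_sup.1 hv.2
  by_cases hg : GoodSet edges U
  · rw [if_pos hg] at hvU
    have h1 : 1 < ((edges h) ∩ U).card :=
      hg h ⟨v, Finset.mem_inter.2 ⟨hv.1, hvU⟩⟩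
    exact lt_of_lt_of_le h1 (Finset.card_le_card
      (Finset.inter_subset_inter (subset_refl _) (good_subset_core edges hg)))
  · rw [if_neg hg] at hvU
    exact absurd hvU (Finset.notMem_empty v)

lemma burns_noncore (edges : E → Finset V) (B : Set V) :
    ∀ v, v ∉ coreSet edges → Burns edges B v := by
  have hgood : GoodSet edges (Finset.univ.filter fun v => ¬ Burns edges B v) := by
    intro h hne
    by_contra hle
    push_neg at hle
    obtain ⟨v, hv⟩ := hne
    have hcard : (edges h ∩ (Finset.univ.filter fun v => ¬ Burns edges B v)).card = 1 :=
      le_antisymm hle (Finset.card_pos.2 ⟨v, hv⟩)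
    obtain ⟨w, hw⟩ := Finset.card_eq_one.1 hcard
    have hwmem : w ∈ edges h ∩ (Finset.univ.filter fun v => ¬ Burns edges B v) := by
      rw [hw]; exact Finset.mem_singleton_self w
    rw [Finset.mem_inter, Finset.mem_filter] at hwmem
    refine hwmem.2.2 (Burns.spread h w hwmem.1 fun u hu hneu => ?_)
    by_contra hnb
    have hmem : u ∈ edges h ∩ (Finset.univ.filter fun v => ¬ Burns edges B v) :=
      Finset.mem_inter.2 ⟨hu, Finset.mem_filter.2 ⟨Finset.mem_univ u, hnb⟩⟩
    rw [hw, Finset.mem_singleton] at hmem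
    exact hneu hmem
  intro v hv
  by_contra hnb
  exact hv (good_subset_core edges hgood
    (Finset.mem_filter.2 ⟨Finset.mem_univ v, hnb⟩))

lemma burns_of_burns_core (edges : E → Finset V) (B : Set V) (v : V)
    (hv : Burns (fun h => edges h ∩ coreSet edges) B v) : Burns edges B v := by
  induction hv with
  | init v h => exact Burns.init v h
  | spread h v hmem hall ih =>
      refine Burns.spread h v (Finset.mem_inter.1 hmem).1 fun u hu hneu => ?_
      by_cases hc : u ∈ coreSet edges
      · exact ih u (Finset.mem_inter.2 ⟨hu, hc⟩) hneu
      · exact burns_noncore edges B u hc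

lemma burns_core_of_burns (edges : E → Finset V) (B : Set V) (v : V)
    (hv : Burns edges B v) (hvc : v ∈ coreSet edges) :
    Burns (fun h => edges h ∩ coreSet edges) (B ∩ ↑(coreSet edges)) v := by
  revert hvc
  induction hv with
  | init v h => exact fun hvc => Burns.init v ⟨h, hvc⟩
  | spread h v hmem hall ih =>
      intro hvc
      refine Burns.spread h v (Finset.mem_inter.2 ⟨hmem, hvc⟩) fun u hu hneu => ?_
      exact ih u (Finset.mem_inter.1 hu).1 hneu (Finset.mem_inter.1 hu).2

lemma core_iff (edges : E → Finset V) (B : Finset V) (hB : B ⊆ coreSet edges) :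
    (∀ v ∈ coreSet edges, Burns (fun h => edges h ∩ coreSet edges) ↑B v) ↔
      IsLazyBurningSet edges ↑B := by
  constructor
  · intro H v
    by_cases hc : v ∈ coreSet edges
    · exact burns_of_burns_core edges ↑B v (H v hc)
    · exact burns_noncore edges ↑B v hc
  · intro H v hc
    have h := burns_core_of_burns edges ↑B v (H v) hc
    have heq : (↑B : Set V) ∩ ↑(coreSet edges) = ↑B :=
      Set.inter_eq_left.2 (by exact_mod_cast hB)
    rwa [heq] at h

end Aux

theorem stmt15 {V E : Type*} [Fintype V] (edges : E → Finset V) (B : Finset V)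
    (hB : B ⊆ coreSet edges) :
    ((∀ v ∈ coreSet edges, Burns (fun h => edges h ∩ coreSet edges) ↑B v) ↔
        IsLazyBurningSet edges ↑B) ∧
    lazyBurningNumber edges =
      sInf {n | ∃ B' : Finset V, B' ⊆ coreSet edges ∧ B'.card = n ∧
        ∀ v ∈ coreSet edges, Burns (fun h => edges h ∩ coreSet edges) ↑B' v} := by
  refine ⟨core_iff edges B hB, le_antisymm ?_ ?_⟩
  · have hne2 : {n | ∃ B' : Finset V, B' ⊆ coreSet edges ∧ B'.card = n ∧
        ∀ v ∈ coreSet edges, Burns (fun h => edges h ∩ coreSet edges) ↑B' v}.Nonempty :=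
      ⟨(coreSet edges).card, coreSet edges, subset_rfl, rfl,
        fun v hv => Burns.init v (by exact_mod_cast hv)⟩
    obtain ⟨B', hB'sub, hB'card, hB'burn⟩ := Nat.sInf_mem hne2
    have hlbs : IsLazyBurningSet edges ↑B' := (core_iff edges B' hB'sub).1 hB'burn
    exact Nat.sInf_le ⟨B', hB'card, hlbs⟩
  · have hne1 : {n | ∃ B0 : Finset V, B0.card = n ∧ IsLazyBurningSet edges ↑B0}.Nonempty :=
      ⟨Finset.univ.card, Finset.univ, rfl, fun v => Burns.init v (by simp)⟩
    obtain ⟨B0, hB0card, hB0⟩ := Nat.sInf_mem hne1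
    have hcb : ∀ v ∈ coreSet edges,
        Burns (fun h => edges h ∩ coreSet edges) ↑(B0 ∩ coreSet edges) v := by
      intro v hv
      have h := burns_core_of_burns edges ↑B0 v (hB0 v) hv
      rwa [← Finset.coe_inter] at h
    calc sInf {n | ∃ B' : Finset V, B' ⊆ coreSet edges ∧ B'.card = n ∧
          ∀ v ∈ coreSet edges, Burns (fun h => edges h ∩ coreSet edges) ↑B' v}
        ≤ (B0 ∩ coreSet edges).card :=
          Nat.sInf_le ⟨B0 ∩ coreSet edges, Finset.inter_subset_right, rfl, hcb⟩
      _ ≤ B0.card := Finset.card_le_card Finset.inter_subset_left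
      _ = lazyBurningNumber edges := hB0card
end

section
/- The lazy burning number is monotone under vertex removal: for any hypergraph H and vertex v \in V(H), b_L(H) - 1 \le b_L(H \setminus \{v\}) \le b_L(H). -/
open scoped Classical

lemma burns_erase_aux {V E : Type*} [DecidableEq V] (edges : E → Finset V) (v : V) (B : Set V) :
    ∀ u, Burns edges B u → u ≠ v → Burns (fun h => (edges h).erase v) (B \ {v}) u := by
  intro u hb
  induction hb with
  | init w hw => intro hne; exact Burns.init w ⟨hw, hne⟩
  | spread h w hw hall ih =>
      intro hne
      refine Burns.spread h w (Finset.mem_erase.mpr ⟨hne, hw⟩) ?_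
      intro x hx hxw
      have hx' := Finset.mem_erase.mp hx
      exact ih x hx'.2 hxw hx'.1

lemma burns_unerase_aux {V E : Type*} [DecidableEq V] (edges : E → Finset V) (v : V) (B : Set V) :
    ∀ u, Burns (fun h => (edges h).erase v) B u → Burns edges (B ∪ {v}) u := by
  intro u hb
  induction hb with
  | init w hw => exact Burns.init w (Or.inl hw)
  | spread h w hw hall ih =>
      have hw' := Finset.mem_erase.mp hw
      refine Burns.spread h w hw'.2 ?_
      intro x hx hxw
      by_cases hxv : x = v
      · exact Burns.init x (Or.inr (by simp [hxv]))
      · exact ih x (Finset.mem_erase.mpr ⟨hxv, hx⟩) hxw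

theorem stmt16 {V E : Type*} [Fintype V] (edges : E → Finset V) (v : V) :
    lazyBurningNumber edges - 1 ≤
        sInf {n | ∃ B : Finset V, v ∉ B ∧ B.card = n ∧
          ∀ u, u ≠ v → Burns (fun h => (edges h).erase v) ↑B u} ∧
    sInf {n | ∃ B : Finset V, v ∉ B ∧ B.card = n ∧
          ∀ u, u ≠ v → Burns (fun h => (edges h).erase v) ↑B u} ≤
        lazyBurningNumber edges := by
  classical
  set S : Set ℕ := {n | ∃ B : Finset V, B.card = n ∧ IsLazyBurningSet edges ↑B} with hS
  set S' : Set ℕ := {n | ∃ B : Finset V, v ∉ B ∧ B.card = n ∧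
      ∀ u, u ≠ v → Burns (fun h => (edges h).erase v) ↑B u} with hS'
  have hSne : S.Nonempty := ⟨(Finset.univ : Finset V).card,
    Finset.univ, rfl, fun u => Burns.init u (by simp)⟩
  have hS'ne : S'.Nonempty := ⟨(Finset.univ.erase v).card,
    Finset.univ.erase v, by simp, rfl,
    fun u hu => Burns.init u (by simp [hu])⟩
  constructor
  · -- b - 1 ≤ b'
    obtain ⟨B', hvB', hcard, hburn⟩ := Nat.sInf_mem hS'ne
    have hmem : (insert v B').card ∈ S := by
      refine ⟨insert v B', rfl, fun u => ?_⟩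
      by_cases hu : u = v
      · exact Burns.init u (by simp [hu])
      · have := burns_unerase_aux edges v (↑B') u (hburn u hu)
        have hset : (↑B' : Set V) ∪ {v} = ↑(insert v B') := by
          simp [Set.union_comm]
        rwa [hset] at this
    have h1 : sInf S ≤ (insert v B').card := Nat.sInf_le hmem
    have h2 : (insert v B').card = B'.card + 1 := Finset.card_insert_of_notMem hvB'
    show sInf S - 1 ≤ sInf S'
    omega
  · -- b' ≤ b
    obtain ⟨B, hcard, hburn⟩ := Nat.sInf_mem hSne
    have hmem : (B.erase v).card ∈ S' := by
      refine ⟨B.erase v, by simp, rfl, fun u hu => ?_⟩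
      have := burns_erase_aux edges v (↑B) u (hburn u) hu
      rwa [← Finset.coe_erase] at this
    have h1 : sInf S' ≤ (B.erase v).card := Nat.sInf_le hmem
    have h2 : (B.erase v).card ≤ B.card := Finset.card_erase_le
    show sInf S' ≤ sInf S
    omega
end
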